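/- Let f : ℝ^d → ℝ be convex and continuously differentiable, let ν be a (σ-finite) measure on ℝ^d, and for m > 0 define F_m := {z ∈ ℝ^d | ∫ exp(−m·D_f(z, x)) dν(x) < ∞}. If F_n ≠ ∅ for some n > 0, then F_m = ℝ^d for every m > n. -/

import Mathlib

open MeasureTheory

/-- Subgradient inequality for a convex differentiable function. -/
lemma grad_subgradient_ineq {E : Type*} [NormedAddCommGroup E] [InnerProductSpace ℝ E] [CompleteSpace E]
    (f : E → ℝ) (hconv : ConvexOn ℝ Set.univ f) (hdiff : Differentiable ℝ f)
    (x w : E) : (inner ℝ (gradient f x) (w - x) : ℝ) ≤ f w - f x := by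
  set A : ℝ →ᵃ[ℝ] E := AffineMap.lineMap x w with hA
  have hg : ConvexOn ℝ Set.univ (f ∘ A) := by
    have := hconv.comp_affineMap A
    simpa using this
  have hder : HasDerivAt (f ∘ A) (fderiv ℝ f x (w - x)) 0 := by
    have h1 : HasDerivAt (fun t : ℝ => t • (w - x) + x) ((1 : ℝ) • (w - x)) 0 :=
      ((hasDerivAt_id (0 : ℝ)).smul_const (w - x)).add_const x
    rw [one_smul] at h1
    have h2 : HasDerivAt A (w - x) 0 := by
      have heq : (A : ℝ → E) = fun t : ℝ => t • (w - x) + x := by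
        funext t
        simp [hA, AffineMap.lineMap_apply]
      rw [heq]
      exact h1
    have h3 := (hdiff (A 0)).hasFDerivAt.comp_hasDerivAt 0 h2
    simpa [hA] using h3
  have hslope := hg.le_slope_of_hasDerivAt (Set.mem_univ (0 : ℝ)) (Set.mem_univ (1 : ℝ))
    zero_lt_one hder
  have hgrad : fderiv ℝ f x (w - x) = (inner ℝ (gradient f x) (w - x) : ℝ) := by
    have h := (hdiff x).hasGradientAt
    rw [hasGradientAt_iff_hasFDerivAt] at h
    rw [h.fderiv]
    exact InnerProductSpace.toDual_apply_apply
  rw [hgrad] at hslope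
  have hval : slope (f ∘ A) 0 1 = f w - f x := by
    simp [slope_def_field, hA]
  rw [hval] at hslope
  exact hslope

/-- for a convex continuously differentiable function `f : ℝ^d → ℝ` with
Bregman divergence `D`, a σ-finite measure `ν` on `ℝ^d`, and the sets
`F m = {z | ∫ exp(-m·D(z,x)) dν(x) < ∞}`: if `F n ≠ ∅` for some `n > 0`, then
`F m = ℝ^d` for every `m > n`. -/
theorem finiteness_sets_all_above {d : ℕ}
    (f : EuclideanSpace ℝ (Fin d) → ℝ)
    (hconv : ConvexOn ℝ Set.univ f) (hf : ContDiff ℝ 1 f)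
    (D : EuclideanSpace ℝ (Fin d) → EuclideanSpace ℝ (Fin d) → ℝ)
    (hD : ∀ x y, D x y = f x - f y - (inner ℝ (gradient f y) (x - y) : ℝ))
    (ν : Measure (EuclideanSpace ℝ (Fin d))) [SigmaFinite ν]
    (F : ℝ → Set (EuclideanSpace ℝ (Fin d)))
    (hF : ∀ m, F m = {z | ∫⁻ x, ENNReal.ofReal (Real.exp (-(m * D z x))) ∂ν < ⊤})
    (n : ℝ) (hn : 0 < n) (hne : (F n).Nonempty) :
    ∀ m : ℝ, n < m → F m = Set.univ := by
  intro m hm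
  obtain ⟨z₀, hz₀⟩ := hne
  rw [hF] at hz₀
  rw [hF]
  apply Set.eq_univ_of_forall
  intro z
  have hdiff : Differentiable ℝ f := hf.differentiable one_ne_zero
  have hmn : (0 : ℝ) < m - n := by linarith
  set w : EuclideanSpace ℝ (Fin d) := (m - n)⁻¹ • (m • z - n • z₀) with hw
  set C : ℝ := (m - n) * f w + n * f z₀ - m * f z with hC
  have key : ∀ x, n * D z₀ x - m * D z x ≤ C := by
    intro x
    have hg := grad_subgradient_ineq f hconv hdiff x w
    have hvec : (m - n) • (w - x) = m • (z - x) - n • (z₀ - x) := by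
      have h1 : (m - n) • w = m • z - n • z₀ := smul_inv_smul₀ hmn.ne' _
      rw [smul_sub, h1]
      module
    have hinner : (m - n) * (inner ℝ (gradient f x) (w - x) : ℝ)
        = m * (inner ℝ (gradient f x) (z - x) : ℝ) - n * (inner ℝ (gradient f x) (z₀ - x) : ℝ) := by
      rw [← real_inner_smul_right, hvec, inner_sub_right, real_inner_smul_right,
        real_inner_smul_right]
    have hmul : (m - n) * (inner ℝ (gradient f x) (w - x) : ℝ) ≤ (m - n) * (f w - f x) :=
      mul_le_mul_of_nonneg_left hg hmn.le
    rw [hD z₀ x, hD z x, hC]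
    nlinarith [hmul, hinner]
  have hpt : ∀ x, Real.exp (-(m * D z x)) ≤ Real.exp C * Real.exp (-(n * D z₀ x)) := by
    intro x
    rw [← Real.exp_add]
    exact Real.exp_le_exp.mpr (by linarith [key x])
  calc ∫⁻ x, ENNReal.ofReal (Real.exp (-(m * D z x))) ∂ν
      ≤ ∫⁻ x, ENNReal.ofReal (Real.exp C) * ENNReal.ofReal (Real.exp (-(n * D z₀ x))) ∂ν := by
        refine lintegral_mono fun x => ?_
        rw [← ENNReal.ofReal_mul (Real.exp_nonneg C)]
        exact ENNReal.ofReal_le_ofReal (hpt x)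
    _ = ENNReal.ofReal (Real.exp C) * ∫⁻ x, ENNReal.ofReal (Real.exp (-(n * D z₀ x))) ∂ν :=
        lintegral_const_mul' _ _ ENNReal.ofReal_ne_top
    _ < ⊤ := ENNReal.mul_lt_top ENNReal.ofReal_lt_top hz₀
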